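/- Let x be k-sparse, 1 < q < ∞, and suppose ‖w‖₂ ≤ ε where y = Ax + w. If x̂ solves the basis pursuit min ‖z‖₁ s.t. ‖y − Az‖₂ ≤ ε, then ‖x̂ − x‖_q ≤ 2ε / ρ_{q, 2^{q/(q−1)} k}(A) and ‖x̂ − x‖₁ ≤ 4 k^{1−1/q} ε / ρ_{q, 2^{q/(q−1)} k}(A), provided ρ_{q, 2^{q/(q−1)} k}(A) > 0. -/

import Mathlib

open Finset Matrix

noncomputable def l1 {N : ℕ} (z : Fin N → ℝ) : ℝ := ∑ i, |z i|
noncomputable def lq {N : ℕ} (q : ℝ) (z : Fin N → ℝ) : ℝ := (∑ i, |z i| ^ q) ^ (1/q)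
noncomputable def l2 {m : ℕ} (v : Fin m → ℝ) : ℝ := Real.sqrt (∑ i, (v i)^2)
noncomputable def linf {N : ℕ} (z : Fin N → ℝ) : ℝ := ⨆ i, |z i|
open scoped Classical in
noncomputable def l0 {N : ℕ} (z : Fin N → ℝ) : ℕ := (Finset.univ.filter (fun i => z i ≠ 0)).card
noncomputable def sparsityQ {N : ℕ} (q : ℝ) (z : Fin N → ℝ) : ℝ := (l1 z / lq q z) ^ (q/(q-1))
noncomputable def cmsv {m N : ℕ} (q s : ℝ) (A : Matrix (Fin m) (Fin N) ℝ) : ℝ :=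
  sInf { r | ∃ z : Fin N → ℝ, z ≠ 0 ∧ sparsityQ q z ≤ s ∧ r = l2 (A.mulVec z) / lq q z }

lemma l2_eq_norm {m : ℕ} (v : Fin m → ℝ) :
    l2 v = ‖(WithLp.equiv 2 (Fin m → ℝ)).symm v‖ := by
  rw [EuclideanSpace.norm_eq]
  simp [l2, sq_abs]

lemma l2_sub_le {m : ℕ} (a b : Fin m → ℝ) : l2 (a - b) ≤ l2 a + l2 b := by
  rw [l2_eq_norm, l2_eq_norm, l2_eq_norm]
  exact norm_sub_le _ _

lemma l2_nonneg {m : ℕ} (v : Fin m → ℝ) : 0 ≤ l2 v := Real.sqrt_nonneg _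

lemma lq_nonneg {N : ℕ} (q : ℝ) (z : Fin N → ℝ) : 0 ≤ lq q z :=
  Real.rpow_nonneg (Finset.sum_nonneg fun i _ => Real.rpow_nonneg (abs_nonneg _) _) _

lemma lq_pos {N : ℕ} {q : ℝ} {z : Fin N → ℝ} (hz : z ≠ 0) : 0 < lq q z := by
  obtain ⟨i, hi⟩ : ∃ i, z i ≠ 0 := by
    by_contra hc; push_neg at hc; exact hz (funext hc)
  have hsum : 0 < ∑ j, |z j| ^ q :=
    Finset.sum_pos' (fun j _ => Real.rpow_nonneg (abs_nonneg _) _)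
      ⟨i, Finset.mem_univ i, Real.rpow_pos_of_pos (abs_pos.2 hi) q⟩
  exact Real.rpow_pos_of_pos hsum _

theorem stmt12 {m N k : ℕ} (A : Matrix (Fin m) (Fin N) ℝ)
    (x xh : Fin N → ℝ) (w y : Fin m → ℝ) (ε : ℝ)
    (hy : y = A.mulVec x + w) (hw : l2 w ≤ ε)
    (hx : l0 x ≤ k) (q : ℝ) (hq : 1 < q)
    (hfeas : l2 (y - A.mulVec xh) ≤ ε)
    (hmin : ∀ z : Fin N → ℝ, l2 (y - A.mulVec z) ≤ ε → l1 xh ≤ l1 z)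
    (hρ : 0 < cmsv q ((2:ℝ) ^ (q/(q-1)) * (k : ℝ)) A) :
    lq q (xh - x) ≤ 2 * ε / cmsv q ((2:ℝ) ^ (q/(q-1)) * (k : ℝ)) A ∧
      l1 (xh - x) ≤ 4 * (k : ℝ) ^ (1 - 1/q) * ε / cmsv q ((2:ℝ) ^ (q/(q-1)) * (k : ℝ)) A := by
  classical
  set ρ := cmsv q ((2:ℝ) ^ (q/(q-1)) * (k : ℝ)) A with hρdef
  have hq0 : (0:ℝ) < q := lt_trans one_pos hq
  have hq1 : (0:ℝ) < q - 1 := sub_pos.2 hq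
  have hqne : q ≠ 0 := ne_of_gt hq0
  have hεnn : 0 ≤ ε := le_trans (l2_nonneg w) hw
  have hknn : (0:ℝ) ≤ (k : ℝ) ^ (1 - 1/q) := Real.rpow_nonneg (Nat.cast_nonneg k) _
  set h : Fin N → ℝ := xh - x with hh
  have hq1ne : q - 1 ≠ 0 := ne_of_gt hq1
  have hexp : (0:ℝ) ≤ 1 - 1/q := by
    have : 1/q < 1 := (div_lt_one hq0).2 hq
    linarith
  by_cases hzero : h = 0
  · have hz : h = 0 := hzero
    rw [hz]
    constructor
    · have : lq q (0 : Fin N → ℝ) = 0 := by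
        simp [lq, Real.zero_rpow hqne, Real.zero_rpow (one_div_ne_zero hqne),
          Real.zero_rpow (inv_ne_zero hqne)]
      rw [this]
      positivity
    · have : l1 (0 : Fin N → ℝ) = 0 := by simp [l1]
      rw [this]; positivity
  -- the key ℓ¹ vs ℓq bound
  have hxfeas : l2 (y - A.mulVec x) ≤ ε := by
    have : y - A.mulVec x = w := by rw [hy]; abel
    rw [this]; exact hw
  have hl1 : l1 xh ≤ l1 x := hmin x hxfeas
  set S : Finset (Fin N) := Finset.univ.filter (fun i => x i ≠ 0) with hS
  have hcard : (S.card : ℝ) ≤ (k : ℝ) := by exact_mod_cast hx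
  have hxh_eq : ∀ i, xh i = x i + h i := by intro i; simp [hh]
  -- split l1 over S and Sᶜ
  have split1 : ∀ z : Fin N → ℝ, l1 z = ∑ i ∈ S, |z i| + ∑ i ∈ Sᶜ, |z i| := by
    intro z
    rw [l1, ← Finset.sum_add_sum_compl S]
  have hxoff : ∀ i ∈ Sᶜ, x i = 0 := by
    intro i hi
    simp only [hS, Finset.mem_compl, Finset.mem_filter, Finset.mem_univ, true_and,
      not_not] at hi
    exact hi
  have hkey : ∑ i ∈ Sᶜ, |h i| ≤ ∑ i ∈ S, |h i| := by
    have h1 : ∑ i ∈ S, |xh i| ≥ ∑ i ∈ S, |x i| - ∑ i ∈ S, |h i| := by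
      rw [← Finset.sum_sub_distrib]
      refine Finset.sum_le_sum fun i _ => ?_
      rw [hxh_eq i]
      have := abs_add_le (x i + h i) (-h i)
      simp only [add_neg_cancel_right, abs_neg] at this
      linarith
    have h2 : ∑ i ∈ Sᶜ, |xh i| = ∑ i ∈ Sᶜ, |h i| := by
      refine Finset.sum_congr rfl fun i hi => ?_
      rw [hxh_eq i, hxoff i hi, zero_add]
    have h3 : l1 x = ∑ i ∈ S, |x i| := by
      rw [split1 x]
      have : ∑ i ∈ Sᶜ, |x i| = 0 :=
        Finset.sum_eq_zero fun i hi => by rw [hxoff i hi, abs_zero]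
      linarith
    have h4 := split1 xh
    rw [h2] at h4
    rw [h4, h3] at hl1
    linarith
  have hl1h : l1 h ≤ 2 * ∑ i ∈ S, |h i| := by
    rw [split1 h]; linarith
  -- Hölder
  have hpq : (q/(q-1)).HolderConjugate q := (Real.HolderConjugate.conjExponent hq).symm
  have hinvp : 1 / (q/(q-1)) = 1 - 1/q := by field_simp
  have hholder : ∑ i ∈ S, |h i| ≤ (S.card : ℝ) ^ (1 - 1/q) * lq q h := by
    have H := Real.inner_le_Lp_mul_Lq (s := S) (fun _ => (1:ℝ)) (fun i => |h i|) hpq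
    simp only [one_mul, abs_one, Real.one_rpow, Finset.sum_const, nsmul_eq_mul, mul_one,
      abs_abs] at H
    rw [hinvp] at H
    refine le_trans H (mul_le_mul_of_nonneg_left ?_ (Real.rpow_nonneg (Nat.cast_nonneg _) _))
    rw [lq]
    refine Real.rpow_le_rpow (Finset.sum_nonneg fun i _ => Real.rpow_nonneg (abs_nonneg _) _)
      (Finset.sum_le_sum_of_subset_of_nonneg (Finset.subset_univ S)
        (fun i _ _ => Real.rpow_nonneg (abs_nonneg _) _)) (one_div_nonneg.2 hq0.le)
  have hl1lq : l1 h ≤ 2 * (k : ℝ) ^ (1 - 1/q) * lq q h := by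
    have hck : (S.card : ℝ) ^ (1 - 1/q) ≤ (k : ℝ) ^ (1 - 1/q) :=
      Real.rpow_le_rpow (Nat.cast_nonneg _) hcard hexp
    have := mul_le_mul_of_nonneg_right hck (lq_nonneg q h)
    calc l1 h ≤ 2 * ∑ i ∈ S, |h i| := hl1h
      _ ≤ 2 * ((S.card : ℝ) ^ (1 - 1/q) * lq q h) := by linarith
      _ ≤ 2 * (k : ℝ) ^ (1 - 1/q) * lq q h := by rw [mul_assoc]; linarith
  have hlqpos : 0 < lq q h := lq_pos hzero
  -- sparsity bound
  have hsp : sparsityQ q h ≤ (2:ℝ) ^ (q/(q-1)) * (k : ℝ) := by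
    rw [sparsityQ]
    have hdiv : l1 h / lq q h ≤ 2 * (k : ℝ) ^ (1 - 1/q) := by
      rw [div_le_iff₀ hlqpos]; linarith
    have h1 : (l1 h / lq q h) ^ (q/(q-1)) ≤ (2 * (k : ℝ) ^ (1 - 1/q)) ^ (q/(q-1)) :=
      Real.rpow_le_rpow (div_nonneg (Finset.sum_nonneg fun i _ => abs_nonneg _)
        (lq_nonneg q h)) hdiv (by positivity)
    refine le_trans h1 (le_of_eq ?_)
    rw [Real.mul_rpow (by norm_num) hknn, ← Real.rpow_mul (Nat.cast_nonneg k),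
      show (1 - 1/q) * (q/(q-1)) = 1 by field_simp, Real.rpow_one]
  -- cmsv membership
  have hbdd : BddBelow { r | ∃ z : Fin N → ℝ, z ≠ 0 ∧
      sparsityQ q z ≤ (2:ℝ) ^ (q/(q-1)) * (k : ℝ) ∧ r = l2 (A.mulVec z) / lq q z } := by
    refine ⟨0, fun r hr => ?_⟩
    obtain ⟨z, _, _, rfl⟩ := hr
    exact div_nonneg (l2_nonneg _) (lq_nonneg _ _)
  have hmem : l2 (A.mulVec h) / lq q h ∈ { r | ∃ z : Fin N → ℝ, z ≠ 0 ∧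
      sparsityQ q z ≤ (2:ℝ) ^ (q/(q-1)) * (k : ℝ) ∧ r = l2 (A.mulVec z) / lq q z } :=
    ⟨h, hzero, hsp, rfl⟩
  have hle : ρ ≤ l2 (A.mulVec h) / lq q h := csInf_le hbdd hmem
  -- l2 bound
  have hAh : l2 (A.mulVec h) ≤ 2 * ε := by
    have heq : A.mulVec h = (y - A.mulVec x) - (y - A.mulVec xh) := by
      rw [hh, Matrix.mulVec_sub]; abel
    rw [heq]
    have := l2_sub_le (y - A.mulVec x) (y - A.mulVec xh)
    linarith
  have hlq2 : lq q h ≤ 2 * ε / ρ := by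
    rw [le_div_iff₀ hρ]
    have hml : ρ * lq q h ≤ l2 (A.mulVec h) := (le_div_iff₀ hlqpos).1 hle
    calc lq q h * ρ = ρ * lq q h := mul_comm _ _
      _ ≤ l2 (A.mulVec h) := hml
      _ ≤ 2 * ε := hAh
  refine ⟨hlq2, ?_⟩
  calc l1 h ≤ 2 * (k : ℝ) ^ (1 - 1/q) * lq q h := hl1lq
    _ ≤ 2 * (k : ℝ) ^ (1 - 1/q) * (2 * ε / ρ) := by
        refine mul_le_mul_of_nonneg_left hlq2 (by positivity)
    _ = 4 * (k : ℝ) ^ (1 - 1/q) * ε / ρ := by ring
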